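/- Let G be an infinite, connected, locally finite simplicial graph with vertex set V, fix v₀ and let B_n be the closed ball of radius n, and let F_n be the space of functions supported in B_n. Then the linear map u_n : F_n → F_n defined by u_n(f)(v) = Δ_G(f)(v) for v ∈ B_n and u_n(f)(v) = 0 otherwise, is bijective. -/

import Mathlib

open SimpleGraph

noncomputable def lap {V : Type*} (G : SimpleGraph V) [G.LocallyFinite] (f : V → ℝ) (v : V) : ℝ :=
  f v - (1 / (G.degree v : ℝ)) * ∑ w ∈ G.neighborFinset v, f w

noncomputable def unMap {V : Type*} (G : SimpleGraph V) [G.LocallyFinite] (v₀ : V) (n : ℕ)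
    (f : {f : V → ℝ // ∀ v, f v ≠ 0 → G.dist v₀ v ≤ n}) :
    {f : V → ℝ // ∀ v, f v ≠ 0 → G.dist v₀ v ≤ n} :=
  ⟨fun v => if G.dist v₀ v ≤ n then lap G f.1 v else 0, by
    intro v hv
    by_contra h
    simp [h] at hv⟩

section Aux

variable {V : Type*} (G : SimpleGraph V) [G.LocallyFinite]

lemma lap_sub (f g : V → ℝ) (v : V) : lap G (f - g) v = lap G f v - lap G g v := by
  simp [lap, Finset.sum_sub_distrib]
  ring

lemma lap_add (f g : V → ℝ) (v : V) : lap G (f + g) v = lap G f v + lap G g v := by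
  simp [lap, Finset.sum_add_distrib]
  ring

lemma lap_smul (c : ℝ) (f : V → ℝ) (v : V) : lap G (c • f) v = c * lap G f v := by
  simp only [lap, Pi.smul_apply, smul_eq_mul, ← Finset.mul_sum]
  ring

lemma lap_neg (f : V → ℝ) (v : V) : lap G (-f) v = - lap G f v := by
  simp [lap]
  ring

lemma ball_finite (h : G.Preconnected) (v₀ : V) (n : ℕ) :
    {v | G.dist v₀ v ≤ n}.Finite := by
  induction n with
  | zero =>
    apply Set.Finite.subset (Set.finite_singleton v₀)
    intro v hv
    simp only [Set.mem_setOf_eq, Nat.le_zero] at hv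
    have := ((h v₀ v).dist_eq_zero_iff).mp hv
    simp [this.symm]
  | succ n ih =>
    apply Set.Finite.subset (ih.union (Set.Finite.biUnion ih
      (fun w _ => (G.neighborSet w).toFinite)))
    intro v hv
    simp only [Set.mem_setOf_eq] at hv
    by_cases hle : G.dist v₀ v ≤ n
    · exact Or.inl hle
    · have hd : G.dist v₀ v = n + 1 := le_antisymm hv (by omega)
      have hne : G.dist v₀ v ≠ 0 := by omega
      obtain ⟨p, hp⟩ := exists_walk_of_dist_ne_zero hne
      obtain ⟨x, hadj, q, hlen⟩ : ∃ x, G.Adj v x ∧ ∃ q : G.Walk x v₀, q.length = n := by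
        cases hq : p.reverse with
        | nil =>
          exfalso
          have := congrArg SimpleGraph.Walk.length hq
          simp [hp, hd] at this
          simp at hne
        | cons hadj q =>
          refine ⟨_, hadj, q, ?_⟩
          have := congrArg SimpleGraph.Walk.length hq
          simp [hp, hd] at this
          omega
      right
      simp only [Set.mem_iUnion, Set.mem_setOf_eq]
      refine ⟨x, ?_, hadj.symm⟩
      have : G.dist v₀ x ≤ q.reverse.length := dist_le _
      simpa [hlen] using this

lemma exists_adj_of_connected [Infinite V] (hconn : G.Connected) (v : V) :
    ∃ w, G.Adj v w := by
  obtain ⟨u, hu⟩ := exists_ne v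
  obtain ⟨p⟩ := hconn v u
  cases p with
  | nil => exact absurd rfl hu.symm
  | cons h _ => exact ⟨_, h⟩

lemma max_principle [Infinite V] (hconn : G.Connected) (v₀ : V) (n : ℕ) (F : V → ℝ)
    (h0 : ∀ v, ¬ G.dist v₀ v ≤ n → F v = 0)
    (hl : ∀ v, G.dist v₀ v ≤ n → lap G F v = 0) :
    ∀ v, F v ≤ 0 := by
  by_contra hc
  push_neg at hc
  obtain ⟨v, hv⟩ := hc
  have hfin := ball_finite G hconn.preconnected v₀ n
  have hvball : G.dist v₀ v ≤ n := by
    by_contra h; rw [h0 v h] at hv; linarith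
  -- maximizer over the ball
  obtain ⟨vm, hmem, hmax⟩ := hfin.toFinset.exists_max_image F
    ⟨v, by simpa using hvball⟩
  set M := F vm with hM
  have hvmax : ∀ u, F u ≤ M := by
    intro u
    by_cases hu : G.dist v₀ u ≤ n
    · exact hmax u (by simpa using hu)
    · rw [h0 u hu]
      calc (0:ℝ) ≤ F v := le_of_lt hv
        _ ≤ M := hmax v (by simpa using hvball)
  have hMpos : 0 < M := lt_of_lt_of_le hv (hvmax v)
  -- any neighbor of a maximizer is a maximizer
  have hstep : ∀ u w, F u = M → G.Adj u w → F w = M := by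
    intro u w hu hadj
    have huball : G.dist v₀ u ≤ n := by
      by_contra h
      rw [h0 u h] at hu
      linarith
    have hlap := hl u huball
    have hdeg : 0 < G.degree u := (G.degree_pos_iff_exists_adj u).mpr ⟨w, hadj⟩
    have hdegR : (0:ℝ) < (G.degree u : ℝ) := by exact_mod_cast hdeg
    have hsum : ∑ x ∈ G.neighborFinset u, F x = (G.degree u : ℝ) * M := by
      rw [lap] at hlap
      field_simp at hlap
      rw [hu] at hlap
      linarith
    have hzero : ∑ x ∈ G.neighborFinset u, (M - F x) = 0 := by
      rw [Finset.sum_sub_distrib, hsum, Finset.sum_const, ← G.card_neighborFinset_eq_degree]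
      simp [nsmul_eq_mul]
    have hall := (Finset.sum_eq_zero_iff_of_nonneg
      (fun x _ => sub_nonneg.mpr (hvmax x))).mp hzero
    have hw := hall w (by simpa [SimpleGraph.mem_neighborFinset] using hadj)
    linarith [sub_eq_zero.mp hw]
  -- propagate along walks
  have hwalk : ∀ (a b : V) (_ : G.Walk a b), F a = M → F b = M := by
    intro a b p
    induction p with
    | nil => exact fun h => h
    | cons hadj p ih => exact fun h => ih (hstep _ _ h hadj)
  -- find a vertex outside the ball
  obtain ⟨u, hu⟩ := hfin.infinite_compl.nonempty
  obtain ⟨p⟩ := hconn vm u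
  have := hwalk vm u p rfl
  rw [h0 u (by simpa using hu)] at this
  linarith

lemma lap_eq_zero_on_ball [Infinite V] (hconn : G.Connected) (v₀ : V) (n : ℕ) (F : V → ℝ)
    (h0 : ∀ v, ¬ G.dist v₀ v ≤ n → F v = 0)
    (hl : ∀ v, G.dist v₀ v ≤ n → lap G F v = 0) :
    F = 0 := by
  funext v
  have h1 := max_principle G hconn v₀ n F h0 hl v
  have h2 := max_principle G hconn v₀ n (-F)
    (fun v hv => by simp [h0 v hv])
    (fun v hv => by rw [lap_neg, hl v hv]; ring) v
  simp only [Pi.neg_apply, neg_nonpos] at h2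
  simp only [Pi.zero_apply]
  linarith

end Aux

theorem stmt17 {V : Type*} [Infinite V] (G : SimpleGraph V) [G.LocallyFinite]
    (hconn : G.Connected) (v₀ : V) (n : ℕ) :
    Function.Bijective (unMap G v₀ n) := by
  have hfin := ball_finite G hconn.preconnected v₀ n
  -- injectivity
  have hinj : Function.Injective (unMap G v₀ n) := by
    intro f g hfg
    have hF : f.1 - g.1 = 0 := by
      apply lap_eq_zero_on_ball G hconn v₀ n
      · intro v hv
        simp [f.2 v |>.mt, g.2 v |>.mt]
        have hf0 : f.1 v = 0 := by
          by_contra h; exact hv (f.2 v h)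
        have hg0 : g.1 v = 0 := by
          by_contra h; exact hv (g.2 v h)
        simp [hf0, hg0]
      · intro v hv
        rw [lap_sub]
        have := congrFun (congrArg Subtype.val hfg) v
        simp only [unMap, if_pos hv] at this
        linarith [this]
    ext v
    have := congrFun hF v
    simp only [Pi.sub_apply, Pi.zero_apply, sub_eq_zero] at this
    exact this
  refine ⟨hinj, ?_⟩
  -- surjectivity via finite dimension
  haveI : Fintype {v : V // G.dist v₀ v ≤ n} := hfin.fintype
  set S := {f : V → ℝ // ∀ v, f v ≠ 0 → G.dist v₀ v ≤ n}
  let ext : ({v : V // G.dist v₀ v ≤ n} → ℝ) → (V → ℝ) :=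
    fun g v => if h : G.dist v₀ v ≤ n then g ⟨v, h⟩ else 0
  have ext_add : ∀ g g', ext (g + g') = ext g + ext g' := by
    intro g g'; funext v; simp only [ext, Pi.add_apply]; split_ifs <;> simp
  have ext_smul : ∀ (c : ℝ) g, ext (c • g) = c • ext g := by
    intro c g; funext v; simp only [ext, Pi.smul_apply, smul_eq_mul]; split_ifs <;> simp
  let e : S ≃ ({v : V // G.dist v₀ v ≤ n} → ℝ) :=
    { toFun := fun f b => f.1 b
      invFun := fun g => ⟨ext g, by
        intro v hv
        by_contra h
        simp [ext, h] at hv⟩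
      left_inv := by
        intro f
        apply Subtype.ext
        funext v
        simp only [ext]
        split_ifs with h
        · rfl
        · by_contra hne
          exact h (f.2 v (Ne.symm hne))
      right_inv := by
        intro g
        funext b
        simp [ext, b.2] }
  let L : ({v : V // G.dist v₀ v ≤ n} → ℝ) →ₗ[ℝ] ({v : V // G.dist v₀ v ≤ n} → ℝ) :=
    { toFun := fun g b => lap G (ext g) b
      map_add' := by
        intro g g'; funext b; simp [ext_add, lap_add]
      map_smul' := by
        intro c g; funext b; simp [ext_smul, lap_smul] }
  have key : ∀ f : S, unMap G v₀ n f = e.symm (L (e f)) := by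
    intro f
    apply Subtype.ext
    funext v
    have hext : ext (e f) = f.1 := by
      funext w
      simp only [ext, e]
      split_ifs with h
      · rfl
      · by_contra hne
        exact h (f.2 w (Ne.symm hne))
    show (if G.dist v₀ v ≤ n then lap G f.1 v else 0) =
      (if h : G.dist v₀ v ≤ n then L (e f) ⟨v, h⟩ else 0)
    split_ifs with h
    · show lap G f.1 v = lap G (ext (e f)) v
      rw [hext]
    · rfl
  have hLinj : Function.Injective L := by
    intro g g' hgg'
    have : unMap G v₀ n (e.symm g) = unMap G v₀ n (e.symm g') := by
      rw [key, key, e.apply_symm_apply, e.apply_symm_apply, hgg']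
    have := hinj this
    calc g = e (e.symm g) := (e.apply_symm_apply g).symm
      _ = e (e.symm g') := by rw [this]
      _ = g' := e.apply_symm_apply g'
  have hLsurj : Function.Surjective L :=
    (LinearMap.injective_iff_surjective).mp hLinj
  intro h
  obtain ⟨g, hg⟩ := hLsurj (e h)
  refine ⟨e.symm g, ?_⟩
  rw [key, e.apply_symm_apply, hg, e.symm_apply_apply]
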